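/- arXiv:2210.15082 — 2 statements merged into one kernel-verified Lean document; each statement's English description precedes it below -/
import Mathlib

section
/- Let n ≥ 1, let V be a nonempty finite subset of ℝⁿ, let x_c ∈ ℝⁿ and δ > 0. Suppose there exists v ∈ V with |v − x_c| ≤ 2δ/5, and let x_rand ∈ ℝⁿ satisfy |x_rand − x_c| ≤ δ/5. Then: (a) any z ∈ V with |z − x_c| > δ satisfies |z − x_rand| > 4δ/5, while |v − x_rand| ≤ 3δ/5; and (b) consequently, every w ∈ V attaining the minimum of |y − x_rand| over y ∈ V satisfies |w − x_c| ≤ 4δ/5 ≤ δ. -/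
/-- deterministic core of the nearest-neighbor lemma. -/
theorem nearest_neighbor_ball {n : ℕ} (hn : 1 ≤ n)
    (V : Finset (EuclideanSpace ℝ (Fin n))) (hV : V.Nonempty)
    (xc xrand : EuclideanSpace ℝ (Fin n)) (δ : ℝ) (hδ : 0 < δ)
    (v : EuclideanSpace ℝ (Fin n)) (hv : v ∈ V) (hvc : ‖v - xc‖ ≤ 2 * δ / 5)
    (hrand : ‖xrand - xc‖ ≤ δ / 5) :
    ((∀ z ∈ V, δ < ‖z - xc‖ → 4 * δ / 5 < ‖z - xrand‖) ∧ ‖v - xrand‖ ≤ 3 * δ / 5) ∧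
    ∀ w ∈ V, (∀ y ∈ V, ‖w - xrand‖ ≤ ‖y - xrand‖) →
      ‖w - xc‖ ≤ 4 * δ / 5 ∧ 4 * δ / 5 ≤ δ := by
  have hvr : ‖v - xrand‖ ≤ 3 * δ / 5 := by
    calc ‖v - xrand‖ ≤ ‖v - xc‖ + ‖xrand - xc‖ := by
          simpa [norm_sub_rev xrand xc] using norm_sub_le_norm_sub_add_norm_sub v xc xrand
      _ ≤ 3 * δ / 5 := by linarith
  have hfar : ∀ z ∈ V, δ < ‖z - xc‖ → 4 * δ / 5 < ‖z - xrand‖ := by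
    intro z _ hz
    have := norm_sub_le_norm_sub_add_norm_sub z xrand xc
    linarith
  refine ⟨⟨hfar, hvr⟩, ?_⟩
  intro w hw hmin
  refine ⟨?_, by linarith⟩
  by_contra h
  push_neg at h
  have hwr : ‖w - xrand‖ ≤ 3 * δ / 5 := le_trans (hmin v hv) hvr
  have := norm_sub_le_norm_sub_add_norm_sub w xrand xc
  linarith
end

section
/- Let E₁ ⊆ ℝ≥0 × ℕ be a compact hybrid time domain with maximal element (T,J) (that is, (T,J) ∈ E₁ and t ≤ T, j ≤ J for all (t,j) ∈ E₁), and let E₂ ⊆ ℝ≥0 × ℕ be a nonempty hybrid time domain. Then E₁ ∪ (E₂ + {(T,J)}) is a hybrid time domain, where E₂ + {(T,J)} = {(t + T, j + J) : (t,j) ∈ E₂} is the Minkowski translate. -/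
/-- A hybrid time domain. -/
def IsHybridTimeDomain (E : Set (ℝ × ℕ)) : Prop :=
  (∀ p ∈ E, 0 ≤ p.1) ∧
  ∀ p ∈ E, ∃ t : ℕ → ℝ, t 0 = 0 ∧ t (p.2 + 1) = p.1 ∧
    (∀ i, i ≤ p.2 → t i ≤ t (i + 1)) ∧
    E ∩ (Set.Icc 0 p.1 ×ˢ Set.Iic p.2) =
      ⋃ j ∈ Set.Iic p.2, Set.Icc (t j) (t (j + 1)) ×ˢ ({j} : Set ℕ)

/-- `(T, J)` is the maximal element of the hybrid time domain `E`. -/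
def IsMaxElem (E : Set (ℝ × ℕ)) (T : ℝ) (J : ℕ) : Prop :=
  (T, J) ∈ E ∧ ∀ p ∈ E, p.1 ≤ T ∧ p.2 ≤ J

private lemma chain_le {t : ℕ → ℝ} {n : ℕ} (h : ∀ i, i ≤ n → t i ≤ t (i + 1)) :
    ∀ i j, i ≤ j → j ≤ n + 1 → t i ≤ t j := by
  intro i j hij hjn
  induction j with
  | zero => obtain rfl : i = 0 := Nat.le_zero.mp hij; exact le_refl _
  | succ k ih =>
    rcases eq_or_lt_of_le hij with rfl | hlt
    · exact le_refl _
    · exact le_trans (ih (by omega) (by omega)) (h k (by omega))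

/-- the union of a compact hybrid time domain with maximal element
`(T, J)` and the Minkowski translate by `(T, J)` of a nonempty hybrid time domain
is again a hybrid time domain. -/
theorem union_translate_isHybridTimeDomain (E₁ E₂ : Set (ℝ × ℕ))
    (hE₁ : IsHybridTimeDomain E₁) (hc : IsCompact E₁)
    (T : ℝ) (J : ℕ) (hmax : IsMaxElem E₁ T J)
    (hE₂ : IsHybridTimeDomain E₂) (hne : E₂.Nonempty) :
    IsHybridTimeDomain (E₁ ∪ ((fun p : ℝ × ℕ => (p.1 + T, p.2 + J)) '' E₂)) := by
  have hT0 : 0 ≤ T := hE₁.1 _ hmax.1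
  constructor
  · rintro p (hp | ⟨q, hq, rfl⟩)
    · exact hE₁.1 p hp
    · have := hE₂.1 q hq
      show 0 ≤ q.1 + T
      linarith
  rintro p (hp | ⟨q, hq, rfl⟩)
  · -- case p ∈ E₁
    obtain ⟨t, ht0, htp, hmono, heq⟩ := hE₁.2 p hp
    refine ⟨t, ht0, htp, hmono, ?_⟩
    rw [← heq]
    ext x
    constructor
    · rintro ⟨hx | ⟨r, hr, rfl⟩, hbox⟩
      · exact ⟨hx, hbox⟩
      · refine ⟨?_, hbox⟩
        have hr1 : 0 ≤ r.1 := hE₂.1 r hr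
        have hp1 : p.1 ≤ T := (hmax.2 p hp).1
        have hp2 : p.2 ≤ J := (hmax.2 p hp).2
        have hb1 : r.1 + T ≤ p.1 := hbox.1.2
        have hb2 : r.2 + J ≤ p.2 := hbox.2
        have e1 : r.1 + T = T := by linarith
        have e2 : r.2 + J = J := by omega
        show ((r.1 + T, r.2 + J) : ℝ × ℕ) ∈ E₁
        rw [e1, e2]
        exact hmax.1
    · rintro ⟨hx, hbox⟩
      exact ⟨Or.inl hx, hbox⟩
  · -- case p = translated q
    obtain ⟨s, hs0, hsq, hsmono, heq₂⟩ := hE₂.2 q hq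
    obtain ⟨u, hu0, huT, humono, heq₁⟩ := hE₁.2 (T, J) hmax.1
    simp only at huT heq₁ hsq heq₂ hsmono humono
    set f : ℝ × ℕ → ℝ × ℕ := fun p => (p.1 + T, p.2 + J) with hf
    set tt : ℕ → ℝ := fun i => if i ≤ J then u i else s (i - J) + T with htt
    have hu_chain : ∀ i j, i ≤ j → j ≤ J + 1 → u i ≤ u j := chain_le humono
    have hs_chain : ∀ i j, i ≤ j → j ≤ q.2 + 1 → s i ≤ s j := chain_le hsmono
    have httmono : ∀ i, i ≤ (q.2 + J) → tt i ≤ tt (i + 1) := by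
      intro i hi
      by_cases h1 : i + 1 ≤ J
      · simp only [htt, if_pos h1, if_pos (by omega : i ≤ J)]
        exact humono i (by omega)
      · by_cases h2 : i ≤ J
        · have hiJ : i = J := by omega
          simp only [htt, if_pos h2, if_neg h1]
          have e : i + 1 - J = 1 := by omega
          rw [e]
          have h3 : u i ≤ u (i + 1) := humono i (by omega)
          rw [show i + 1 = J + 1 from by omega, huT] at h3
          have h4 : s 0 ≤ s 1 := hsmono 0 (Nat.zero_le _)
          linarith [hs0 ▸ h4]
        · simp only [htt, if_neg h1, if_neg h2]
          have e : i + 1 - J = (i - J) + 1 := by omega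
          rw [e]
          have := hsmono (i - J) (by omega)
          linarith
    have htt_chain : ∀ i j, i ≤ j → j ≤ q.2 + J + 1 → tt i ≤ tt j := chain_le httmono
    have htt0 : tt 0 = 0 := by simp [htt, hu0]
    have httend : tt (q.2 + J + 1) = q.1 + T := by
      simp only [htt, if_neg (by omega : ¬ (q.2 + J + 1 ≤ J))]
      have e : q.2 + J + 1 - J = q.2 + 1 := by omega
      rw [e, hsq]
    refine ⟨tt, htt0, ?_, ?_, ?_⟩
    · show tt (q.2 + J + 1) = q.1 + T
      exact httend
    · exact httmono
    · have hq1 : 0 ≤ q.1 := hE₂.1 q hq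
      ext x
      simp only [Set.mem_inter_iff, Set.mem_union, Set.mem_image, Set.mem_prod, Set.mem_Icc,
        Set.mem_Iic, Set.mem_iUnion, Set.mem_singleton_iff, exists_prop]
      have mem₁ : ∀ y : ℝ × ℕ, (y ∈ E₁ ∧ ((0 ≤ y.1 ∧ y.1 ≤ T) ∧ y.2 ≤ J)) ↔
          ∃ j, j ≤ J ∧ ((u j ≤ y.1 ∧ y.1 ≤ u (j + 1)) ∧ y.2 = j) := by
        intro y
        have := Set.ext_iff.mp heq₁ y
        simpa only [Set.mem_inter_iff, Set.mem_prod, Set.mem_Icc, Set.mem_Iic,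
          Set.mem_iUnion, Set.mem_singleton_iff, exists_prop] using this
      have mem₂ : ∀ y : ℝ × ℕ, (y ∈ E₂ ∧ ((0 ≤ y.1 ∧ y.1 ≤ q.1) ∧ y.2 ≤ q.2)) ↔
          ∃ j, j ≤ q.2 ∧ ((s j ≤ y.1 ∧ y.1 ≤ s (j + 1)) ∧ y.2 = j) := by
        intro y
        have := Set.ext_iff.mp heq₂ y
        simpa only [Set.mem_inter_iff, Set.mem_prod, Set.mem_Icc, Set.mem_Iic,
          Set.mem_iUnion, Set.mem_singleton_iff, exists_prop] using this
      constructor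
      · rintro ⟨hx | ⟨r, hr, hrx⟩, hbox⟩
        · -- x ∈ E₁
          have hx1 : x.1 ≤ T := (hmax.2 x hx).1
          have hx2 : x.2 ≤ J := (hmax.2 x hx).2
          have hx0 : 0 ≤ x.1 := hE₁.1 x hx
          obtain ⟨j, hjJ, ⟨hj1, hj2⟩, hj3⟩ := (mem₁ x).mp ⟨hx, ⟨hx0, hx1⟩, hx2⟩
          refine ⟨j, by omega, ⟨?_, ?_⟩, hj3⟩
          · simp only [htt, if_pos hjJ]; exact hj1
          · by_cases h1 : j + 1 ≤ J
            · simp only [htt, if_pos h1]; exact hj2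
            · have hjJ' : j = J := by omega
              simp only [htt, if_neg h1]
              subst hjJ'
              have e : j + 1 - j = 1 := by omega
              rw [e]
              have h4 : s 0 ≤ s 1 := hsmono 0 (Nat.zero_le _)
              rw [huT] at hj2
              linarith [hs0 ▸ h4]
        · -- x comes from E₂
          have hr1 : 0 ≤ r.1 := hE₂.1 r hr
          have hx1 : x.1 = r.1 + T := by rw [← hrx]
          have hx2 : x.2 = r.2 + J := by rw [← hrx]
          have hb1 : x.1 ≤ q.1 + T := hbox.1.2
          have hb2 : x.2 ≤ q.2 + J := hbox.2
          obtain ⟨j, hjq, ⟨hj1, hj2⟩, hj3⟩ := (mem₂ r).mp ⟨hr, ⟨hr1, by linarith [hx1 ▸ hb1]⟩, by omega⟩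
          refine ⟨j + J, by omega, ⟨?_, ?_⟩, by omega⟩
          · -- tt (j + J) ≤ x.1
            rcases Nat.eq_zero_or_pos j with rfl | hjpos
            · simp only [htt, if_pos (le_refl J), Nat.zero_add]
              have h3 : u J ≤ u (J + 1) := humono J le_rfl
              rw [huT] at h3
              rw [hx1]
              linarith
            · simp only [htt, if_neg (by omega : ¬ (j + J ≤ J))]
              have e : j + J - J = j := by omega
              rw [e, hx1]
              linarith
          · simp only [htt, if_neg (by omega : ¬ (j + J + 1 ≤ J))]
            have e : j + J + 1 - J = j + 1 := by omega
            rw [e, hx1]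
            linarith
      · rintro ⟨j, hj, ⟨hj1, hj2⟩, hj3⟩
        have hfq2 : (f q).2 = q.2 + J := rfl
        have hbox : (0 ≤ x.1 ∧ x.1 ≤ q.1 + T) ∧ x.2 ≤ q.2 + J := by
          refine ⟨⟨?_, ?_⟩, by omega⟩
          · have := htt_chain 0 j (Nat.zero_le _) (by omega)
            rw [htt0] at this
            linarith
          · have := htt_chain (j + 1) (q.2 + J + 1) (by omega) le_rfl
            rw [httend] at this
            linarith
        refine ⟨?_, hbox⟩
        by_cases h1 : j < J
        · left
          have e1 : tt j = u j := by simp [htt, (by omega : j ≤ J)]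
          have e2 : tt (j + 1) = u (j + 1) := by simp [htt, (by omega : j + 1 ≤ J)]
          exact ((mem₁ x).mpr ⟨j, by omega, ⟨e1 ▸ hj1, e2 ▸ hj2⟩, hj3⟩).1
        · by_cases h2 : j = J
          · subst h2
            have e1 : tt j = u j := by simp [htt]
            have e2 : tt (j + 1) = s 1 + T := by
              simp only [htt, if_neg (by omega : ¬ (j + 1 ≤ j))]
              congr 1
              congr 1
              omega
            rcases le_total x.1 T with hle | hge
            · left
              have hu2 : x.1 ≤ u (j + 1) := by rw [huT]; exact hle
              exact ((mem₁ x).mpr ⟨j, le_rfl, ⟨e1 ▸ hj1, hu2⟩, hj3⟩).1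
            · right
              refine ⟨(x.1 - T, 0), ?_, ?_⟩
              · refine ((mem₂ (x.1 - T, 0)).mpr ⟨0, Nat.zero_le _, ⟨?_, ?_⟩, rfl⟩).1
                · rw [hs0]; simp; linarith
                · rw [e2] at hj2; simp; linarith
              · show ((x.1 - T + T, 0 + j) : ℝ × ℕ) = x
                have e : x.1 - T + T = x.1 := by ring
                rw [e]
                exact Prod.ext_iff.mpr ⟨rfl, by omega⟩
          · right
            have hjJ : J < j := by omega
            have e1 : tt j = s (j - J) + T := by
              simp only [htt]
              rw [if_neg (show ¬ j ≤ J by omega)]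
            have e2 : tt (j + 1) = s (j - J + 1) + T := by
              simp only [htt, if_neg (by omega : ¬ (j + 1 ≤ J))]
              congr 2
              omega
            refine ⟨(x.1 - T, j - J), ?_, ?_⟩
            · refine ((mem₂ (x.1 - T, j - J)).mpr ⟨j - J, by omega, ⟨?_, ?_⟩, rfl⟩).1
              · rw [e1] at hj1; simp; linarith
              · rw [e2] at hj2; simp; linarith
            · show ((x.1 - T + T, (j - J) + J) : ℝ × ℕ) = x
              have e : x.1 - T + T = x.1 := by ring
              rw [e]
              exact Prod.ext_iff.mpr ⟨rfl, by omega⟩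
end
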